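/- For integers n ≥ r ≥ 1, k ≥ 0, and l ≥ 1, the convolution identity ∑ S2^{(2^l)}(n+i_l, n) · ∏_{s=0}^{l-1} S1^{(2^s)}(n+1, n+1−i_s) = S2^{(1)}(n+k, n) holds, where the sum is over all tuples (i_0, i_1, …, i_l) of nonnegative integers with i_0 + 2i_1 + ⋯ + 2^l i_l = k. -/

import Mathlib

/-- The `(l,r)`-Stirling numbers of the first kind. -/
def S1 (l r : ℕ) : ℕ → ℕ → ℕ
  | n, k =>
    if _h1 : n < r then 0
    else if _h2 : n = r then (if k = r then 1 else 0)
    else S1 l r (n - 1) (k - 1) + (n - 1) ^ l * S1 l r (n - 1) k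
termination_by n _ => n
decreasing_by all_goals omega

/-- The `(l,r)`-Stirling numbers of the second kind. -/
def S2 (l r : ℕ) : ℕ → ℕ → ℕ
  | n, k =>
    if _h1 : n < r then 0
    else if _h2 : n = r then (if k = r then 1 else 0)
    else S2 l r (n - 1) (k - 1) + k ^ l * S2 l r (n - 1) k
termination_by n _ => n
decreasing_by all_goals omega

namespace Stmt13
open PowerSeries Finset




lemma S2_zero_of_lt (m r : ℕ) : ∀ a k, k < r → S2 m r a k = 0 := by
  intro a
  induction a with
  | zero => intro k hk; rw [S2, dif_pos (by omega)]
  | succ a ih =>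
    intro k hk
    by_cases h1 : a + 1 < r
    · rw [S2, dif_pos h1]
    · by_cases h2 : a + 1 = r
      · rw [S2, dif_neg h1, dif_pos h2, if_neg (by omega)]
      · rw [S2, dif_neg h1, dif_neg h2]
        simp only [Nat.add_sub_cancel]
        rw [ih _ (by omega), ih _ hk]
        simp

lemma S2_zero_of_gt (m r : ℕ) : ∀ a k, a < k → S2 m r a k = 0 := by
  intro a
  induction a with
  | zero =>
    intro k hk
    by_cases h1 : 0 < r
    · rw [S2, dif_pos h1]
    · rw [S2, dif_neg (by omega), dif_pos (by omega), if_neg (by omega)]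
  | succ a ih =>
    intro k hk
    by_cases h1 : a + 1 < r
    · rw [S2, dif_pos h1]
    · by_cases h2 : a + 1 = r
      · rw [S2, dif_neg h1, dif_pos h2, if_neg (by omega)]
      · rw [S2, dif_neg h1, dif_neg h2]
        simp only [Nat.add_sub_cancel]
        rw [ih _ (by omega), ih _ (by omega)]
        simp

lemma S2_diag (m r : ℕ) : ∀ a, r ≤ a → S2 m r a a = 1 := by
  intro a ha
  induction a, ha using Nat.le_induction with
  | base => rw [S2, dif_neg (lt_irrefl r), dif_pos rfl, if_pos rfl]
  | succ a ha ih =>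
    rw [S2, dif_neg (by omega), dif_neg (by omega)]
    simp only [Nat.add_sub_cancel]
    rw [ih, S2_zero_of_gt m r a (a+1) (by omega)]
    simp

lemma S1_zero_of_gt (m r : ℕ) : ∀ a k, a < k → S1 m r a k = 0 := by
  intro a
  induction a with
  | zero =>
    intro k hk
    by_cases h1 : 0 < r
    · rw [S1, dif_pos h1]
    · rw [S1, dif_neg (by omega), dif_pos (by omega), if_neg (by omega)]
  | succ a ih =>
    intro k hk
    by_cases h1 : a + 1 < r
    · rw [S1, dif_pos h1]
    · by_cases h2 : a + 1 = r
      · rw [S1, dif_neg h1, dif_pos h2, if_neg (by omega)]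
      · rw [S1, dif_neg h1, dif_neg h2]
        simp only [Nat.add_sub_cancel]
        rw [ih _ (by omega), ih _ (by omega)]
        simp

lemma S1_diag (m r : ℕ) : ∀ a, r ≤ a → S1 m r a a = 1 := by
  intro a ha
  induction a, ha using Nat.le_induction with
  | base => rw [S1, dif_neg (lt_irrefl r), dif_pos rfl, if_pos rfl]
  | succ a ha ih =>
    rw [S1, dif_neg (by omega), dif_neg (by omega)]
    simp only [Nat.add_sub_cancel]
    rw [ih, S1_zero_of_gt m r a (a+1) (by omega)]
    simp






noncomputable def Dfun (φ : PowerSeries ℤ) : PowerSeries ℤ :=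
  PowerSeries.mk fun k => if 2 ∣ k then coeff (k / 2) φ else 0

lemma coeff_Dfun (φ : PowerSeries ℤ) (k : ℕ) :
    coeff k (Dfun φ) = if 2 ∣ k then coeff (k / 2) φ else 0 := coeff_mk _ _

lemma Dfun_mul (φ ψ : PowerSeries ℤ) : Dfun (φ * ψ) = Dfun φ * Dfun ψ := by
  ext k
  rw [coeff_Dfun]
  conv_rhs => rw [PowerSeries.coeff_mul]
  simp only [coeff_Dfun]
  by_cases hk : 2 ∣ k
  · obtain ⟨k', rfl⟩ := hk
    rw [if_pos (dvd_mul_right 2 k'), show 2 * k' / 2 = k' by omega, PowerSeries.coeff_mul]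
    refine (Finset.sum_bij_ne_zero (fun p _ _ => (p.1 / 2, p.2 / 2)) ?_ ?_ ?_ ?_).symm
    · intro p hp hne
      rw [Finset.HasAntidiagonal.mem_antidiagonal] at hp ⊢
      have h1 : 2 ∣ p.1 := by by_contra h; simp [h] at hne
      have h2 : 2 ∣ p.2 := by by_contra h; simp [h] at hne
      omega
    · intro p₁ h₁₁ h₁₂ p₂ h₂₁ h₂₂ heq
      have d11 : 2 ∣ p₁.1 := by by_contra h; simp [h] at h₁₂
      have d12 : 2 ∣ p₁.2 := by by_contra h; simp [h] at h₁₂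
      have d21 : 2 ∣ p₂.1 := by by_contra h; simp [h] at h₂₂
      have d22 : 2 ∣ p₂.2 := by by_contra h; simp [h] at h₂₂
      rw [Prod.ext_iff] at heq ⊢
      obtain ⟨e1, e2⟩ := heq
      constructor <;> omega
    · intro q hq hgne
      rw [Finset.HasAntidiagonal.mem_antidiagonal] at hq
      refine ⟨(2 * q.1, 2 * q.2), ?_, ?_, ?_⟩
      · rw [Finset.HasAntidiagonal.mem_antidiagonal]; omega
      · rw [if_pos (dvd_mul_right 2 q.1), if_pos (dvd_mul_right 2 q.2),
          show 2 * q.1 / 2 = q.1 by omega, show 2 * q.2 / 2 = q.2 by omega]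
        exact hgne
      · rw [Prod.ext_iff]; constructor <;> simp <;> omega
    · intro p h₁ h₂
      have d1 : 2 ∣ p.1 := by by_contra h; simp [h] at h₂
      have d2 : 2 ∣ p.2 := by by_contra h; simp [h] at h₂
      rw [if_pos d1, if_pos d2]
  · rw [if_neg hk]
    symm
    apply Finset.sum_eq_zero
    intro p hp
    rw [Finset.HasAntidiagonal.mem_antidiagonal] at hp
    by_cases h1 : 2 ∣ p.1
    · rw [if_neg (show ¬ 2 ∣ p.2 by omega), mul_zero]
    · rw [if_neg h1, zero_mul]

lemma Dfun_one : Dfun 1 = 1 := by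
  ext k
  rw [coeff_Dfun, PowerSeries.coeff_one, PowerSeries.coeff_one]
  split_ifs <;> omega

noncomputable def D : PowerSeries ℤ →+* PowerSeries ℤ where
  toFun := Dfun
  map_one' := Dfun_one
  map_mul' := Dfun_mul
  map_zero' := by ext k; rw [coeff_Dfun]; simp
  map_add' := by
    intro a b
    ext k
    rw [coeff_Dfun, map_add, map_add, coeff_Dfun, coeff_Dfun]
    split_ifs <;> simp

lemma coeff_D (φ : PowerSeries ℤ) (k : ℕ) :
    coeff k (D φ) = if 2 ∣ k then coeff (k / 2) φ else 0 := coeff_Dfun φ k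

lemma D_C (c : ℤ) : D (C c) = C c := by
  ext k
  rw [coeff_D, PowerSeries.coeff_C, PowerSeries.coeff_C]
  split_ifs <;> omega

lemma D_X : D X = X ^ 2 := by
  ext k
  rw [coeff_D, PowerSeries.coeff_X, PowerSeries.coeff_X_pow]
  split_ifs <;> omega

lemma D_iter_coeff (e : ℕ) (φ : PowerSeries ℤ) (k : ℕ) :
    coeff k ((⇑D)^[e] φ) = if 2 ^ e ∣ k then coeff (k / 2 ^ e) φ else 0 := by
  induction e generalizing k with
  | zero => simp
  | succ e ih =>
    rw [Function.iterate_succ_apply', coeff_D]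
    by_cases h2 : 2 ∣ k
    · obtain ⟨k', rfl⟩ := h2
      rw [if_pos (dvd_mul_right 2 k'), show 2 * k' / 2 = k' by omega, ih]
      have h4 : 2 ^ (e + 1) ∣ 2 * k' ↔ 2 ^ e ∣ k' := by
        rw [pow_succ']
        exact Nat.mul_dvd_mul_iff_left (by norm_num)
      have h5 : 2 * k' / 2 ^ (e + 1) = k' / 2 ^ e := by
        rw [pow_succ', Nat.mul_div_mul_left _ _ (by norm_num)]
      by_cases h6 : 2 ^ e ∣ k' <;> simp [h4, h5, h6]
    · rw [if_neg h2, if_neg (fun h => h2 (dvd_trans (dvd_pow_self 2 (Nat.succ_ne_zero e)) h))]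

lemma D_iter_mul (e : ℕ) (a b : PowerSeries ℤ) :
    (⇑D)^[e] (a * b) = (⇑D)^[e] a * (⇑D)^[e] b := by
  induction e with
  | zero => simp
  | succ e ih =>
    rw [Function.iterate_succ_apply', Function.iterate_succ_apply',
      Function.iterate_succ_apply', ih, map_mul]






noncomputable def f2 (m r n : ℕ) : PowerSeries ℤ :=
  PowerSeries.mk fun k => (S2 m r (n + k) n : ℤ)

noncomputable def f1 (m r n : ℕ) : PowerSeries ℤ :=
  PowerSeries.mk fun i => (S1 m r (n + 1) (n + 1 - i) : ℤ)

lemma coeff_f2 (m r n k : ℕ) : coeff k (f2 m r n) = (S2 m r (n + k) n : ℤ) := coeff_mk _ _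

lemma coeff_f1 (m r n i : ℕ) : coeff i (f1 m r n) = (S1 m r (n + 1) (n + 1 - i) : ℤ) :=
  coeff_mk _ _

lemma coeff_CX (c : ℤ) (φ : PowerSeries ℤ) (k : ℕ) :
    coeff k (C c * X * φ) = if k = 0 then 0 else c * coeff (k - 1) φ := by
  rw [mul_assoc, coeff_C_mul]
  cases k with
  | zero => simp
  | succ k => rw [coeff_succ_X_mul]; simp

lemma f2_base (m r : ℕ) (hr : 1 ≤ r) :
    f2 m r r = 1 + C ((r : ℤ) ^ m) * X * f2 m r r := by
  ext k
  rw [map_add, coeff_f2, coeff_CX, PowerSeries.coeff_one]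
  cases k with
  | zero => simp [S2_diag m r r le_rfl]
  | succ k =>
    rw [if_neg (Nat.succ_ne_zero k), if_neg (Nat.succ_ne_zero k), coeff_f2]
    rw [show r + (k + 1) = (r + k) + 1 by omega]
    conv_lhs => rw [S2, dif_neg (by omega : ¬ r + k + 1 < r), dif_neg (by omega : ¬ r + k + 1 = r)]
    simp only [Nat.add_sub_cancel]
    rw [S2_zero_of_lt m r (r + k) (r - 1) (by omega)]
    push_cast
    ring

lemma f2_succ (m r n : ℕ) (hn : r ≤ n) :
    f2 m r (n + 1) = f2 m r n + C (((n + 1 : ℕ) : ℤ) ^ m) * X * f2 m r (n + 1) := by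
  ext k
  rw [map_add, coeff_f2, coeff_f2, coeff_CX]
  cases k with
  | zero =>
    simp [S2_diag m r (n + 1) (by omega), S2_diag m r n hn]
  | succ k =>
    rw [if_neg (Nat.succ_ne_zero k), coeff_f2]
    rw [show n + 1 + (k + 1) = (n + 1 + k) + 1 by omega]
    conv_lhs => rw [S2, dif_neg (by omega : ¬ n + 1 + k + 1 < r),
      dif_neg (by omega : ¬ n + 1 + k + 1 = r)]
    simp only [Nat.add_sub_cancel]
    rw [show n + (k + 1) = n + 1 + k by omega]
    push_cast
    ring

lemma prodA (m r : ℕ) (hr : 1 ≤ r) :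
    ∀ n, r ≤ n → (∏ j ∈ Finset.Icc r n, (1 - C ((j : ℤ) ^ m) * X)) * f2 m r n = 1 := by
  intro n hn
  induction n, hn using Nat.le_induction with
  | base =>
    rw [Finset.Icc_self, Finset.prod_singleton]
    linear_combination f2_base m r hr
  | succ n hn ih =>
    rw [Finset.prod_Icc_succ_top (by omega : r ≤ n + 1), mul_assoc]
    have h : (1 - C (((n + 1 : ℕ) : ℤ) ^ m) * X) * f2 m r (n + 1) = f2 m r n := by
      linear_combination f2_succ m r n hn
    rw [h, ih]

lemma f1_base (m r : ℕ) (hr : 1 ≤ r) : f1 m r r = 1 + C ((r : ℤ) ^ m) * X := by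
  have hrow : ∀ j, S1 m r r j = if j = r then 1 else 0 := by
    intro j
    rw [S1, dif_neg (lt_irrefl r), dif_pos rfl]
  ext k
  rw [coeff_f1, map_add, PowerSeries.coeff_one, coeff_C_mul, PowerSeries.coeff_X]
  conv_lhs => rw [S1, dif_neg (by omega : ¬ r + 1 < r), dif_neg (by omega : ¬ r + 1 = r)]
  simp only [Nat.add_sub_cancel]
  rw [hrow, hrow]
  split_ifs <;> first | (exfalso; omega) | (push_cast; ring)

lemma f1_succ (m r n : ℕ) (hn : r ≤ n) :
    f1 m r (n + 1) = f1 m r n + C (((n + 1 : ℕ) : ℤ) ^ m) * X * f1 m r n := by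
  ext k
  rw [map_add, coeff_f1, coeff_f1, coeff_CX]
  cases k with
  | zero =>
    simp [S1_diag m r (n + 1 + 1) (by omega), S1_diag m r (n + 1) (by omega)]
  | succ k =>
    rw [if_neg (Nat.succ_ne_zero k), coeff_f1]
    conv_lhs => rw [S1, dif_neg (by omega : ¬ n + 1 + 1 < r), dif_neg (by omega : ¬ n + 1 + 1 = r)]
    simp only [Nat.add_sub_cancel]
    rw [show n + 1 + 1 - (k + 1) - 1 = n + 1 - (k + 1) by omega,
      show n + 1 + 1 - (k + 1) = n + 1 - k by omega]
    push_cast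
    ring

lemma prodB (m r : ℕ) (hr : 1 ≤ r) :
    ∀ n, r ≤ n → f1 m r n = ∏ j ∈ Finset.Icc r n, (1 + C ((j : ℤ) ^ m) * X) := by
  intro n hn
  induction n, hn using Nat.le_induction with
  | base => rw [Finset.Icc_self, Finset.prod_singleton]; exact f1_base m r hr
  | succ n hn ih =>
    rw [Finset.prod_Icc_succ_top (by omega : r ≤ n + 1), ← ih]
    linear_combination f1_succ m r n hn

lemma key (m r n : ℕ) (hr : 1 ≤ r) (hn : r ≤ n) :
    f2 m r n = f1 m r n * D (f2 (2 * m) r n) := by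
  set P := ∏ j ∈ Finset.Icc r n, (1 - C ((j : ℤ) ^ m) * X) with hPdef
  have hP : P * f2 m r n = 1 := prodA m r hr n hn
  have hPQ : P * f1 m r n = D (∏ j ∈ Finset.Icc r n, (1 - C ((j : ℤ) ^ (2 * m)) * X)) := by
    rw [prodB m r hr n hn, hPdef, ← Finset.prod_mul_distrib, map_prod]
    refine Finset.prod_congr rfl fun j _ => ?_
    rw [map_sub, map_one, map_mul, D_C, D_X]
    have h2 : C ((j : ℤ) ^ (2 * m)) = C ((j : ℤ) ^ m) * C ((j : ℤ) ^ m) := by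
      rw [← map_mul, ← pow_add, two_mul]
    rw [h2]
    ring
  have hP2 : P * (f1 m r n * D (f2 (2 * m) r n)) = 1 := by
    rw [← mul_assoc, hPQ, ← map_mul, prodA (2 * m) r hr n hn, map_one]
  calc f2 m r n = (P * (f1 m r n * D (f2 (2 * m) r n))) * f2 m r n := by rw [hP2, one_mul]
    _ = (f1 m r n * D (f2 (2 * m) r n)) * (P * f2 m r n) := by ring
    _ = f1 m r n * D (f2 (2 * m) r n) := by rw [hP, mul_one]

lemma main (r n : ℕ) (hr : 1 ≤ r) (hn : r ≤ n) :
    ∀ l, (∏ s ∈ Finset.range l, (⇑D)^[s] (f1 (2 ^ s) r n)) * (⇑D)^[l] (f2 (2 ^ l) r n) =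
      f2 1 r n := by
  intro l
  induction l with
  | zero => simp
  | succ l ih =>
    rw [Finset.prod_range_succ, ← ih]
    have h : (⇑D)^[l] (f2 (2 ^ l) r n) =
        (⇑D)^[l] (f1 (2 ^ l) r n) * (⇑D)^[l + 1] (f2 (2 ^ (l + 1)) r n) := by
      rw [key (2 ^ l) r n hr hn, D_iter_mul, Function.iterate_succ_apply,
        show (2 : ℕ) * 2 ^ l = 2 ^ (l + 1) by rw [pow_succ']]
    rw [h, mul_assoc]



noncomputable def Phi (l r n : ℕ) (s : Fin (l + 1)) : PowerSeries ℤ :=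
  (⇑D)^[(s : ℕ)] (if (s : ℕ) < l then f1 (2 ^ (s : ℕ)) r n else f2 (2 ^ l) r n)

lemma Phi_castSucc (l r n : ℕ) (s : Fin l) :
    Phi l r n s.castSucc = (⇑D)^[(s : ℕ)] (f1 (2 ^ (s : ℕ)) r n) := by
  simp only [Phi, Fin.coe_castSucc]
  rw [if_pos s.isLt]

lemma Phi_last (l r n : ℕ) : Phi l r n (Fin.last l) = (⇑D)^[l] (f2 (2 ^ l) r n) := by
  simp only [Phi, Fin.val_last]
  rw [if_neg (lt_irrefl l)]

lemma Phi_coeff_mul (l r n : ℕ) (s : Fin (l + 1)) (x : ℕ) :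
    coeff (2 ^ (s : ℕ) * x) (Phi l r n s) =
      coeff x (if (s : ℕ) < l then f1 (2 ^ (s : ℕ)) r n else f2 (2 ^ l) r n) := by
  simp only [Phi]
  rw [D_iter_coeff, if_pos (dvd_mul_right _ _), Nat.mul_div_cancel_left x (by positivity)]

lemma Phi_coeff_ne (l r n : ℕ) (s : Fin (l + 1)) (y : ℕ) (h : ¬ 2 ^ (s : ℕ) ∣ y) :
    coeff y (Phi l r n s) = 0 := by
  simp only [Phi]
  rw [D_iter_coeff, if_neg h]

lemma Phi_prod (l r n : ℕ) (hr : 1 ≤ r) (hn : r ≤ n) :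
    ∏ s : Fin (l + 1), Phi l r n s = f2 1 r n := by
  rw [Fin.prod_univ_castSucc, Phi_last]
  have h1 : (∏ s : Fin l, Phi l r n s.castSucc) =
      ∏ s ∈ Finset.range l, (⇑D)^[s] (f1 (2 ^ s) r n) := by
    rw [← Fin.prod_univ_eq_prod_range]
    exact Finset.prod_congr rfl fun s _ => Phi_castSucc l r n s
  rw [h1]
  exact main r n hr hn l

lemma term_eq (l r n k : ℕ) (f : Fin (l + 1) → Fin (k + 1)) :
    (∏ s : Fin (l + 1), coeff (2 ^ (s : ℕ) * (f s : ℕ)) (Phi l r n s)) =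
      (S2 (2 ^ l) r (n + (f (Fin.last l) : ℕ)) n : ℤ) *
        ∏ s : Fin l, (S1 (2 ^ (s : ℕ)) r (n + 1) (n + 1 - (f s.castSucc : ℕ)) : ℤ) := by
  rw [Fin.prod_univ_castSucc]
  have hlast : coeff (2 ^ ((Fin.last l : Fin (l + 1)) : ℕ) * (f (Fin.last l) : ℕ))
      (Phi l r n (Fin.last l)) = (S2 (2 ^ l) r (n + (f (Fin.last l) : ℕ)) n : ℤ) := by
    rw [Phi_coeff_mul]
    simp only [Fin.val_last]
    rw [if_neg (lt_irrefl l), coeff_f2]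
  have hcs : ∀ s : Fin l, coeff (2 ^ ((s.castSucc : Fin (l + 1)) : ℕ) * (f s.castSucc : ℕ))
      (Phi l r n s.castSucc) =
      (S1 (2 ^ (s : ℕ)) r (n + 1) (n + 1 - (f s.castSucc : ℕ)) : ℤ) := by
    intro s
    rw [Phi_coeff_mul]
    simp only [Fin.coe_castSucc]
    rw [if_pos s.isLt, coeff_f1]
  rw [hlast, Finset.prod_congr rfl (fun s _ => hcs s)]
  exact mul_comm _ _

lemma finalZ (l r n k : ℕ) (hr : 1 ≤ r) (hn : r ≤ n) :
    ∑ f ∈ Finset.univ.filter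
        (fun f : Fin (l + 1) → Fin (k + 1) => ∑ s : Fin (l + 1), 2 ^ (s : ℕ) * (f s : ℕ) = k),
      ((S2 (2 ^ l) r (n + (f (Fin.last l) : ℕ)) n : ℤ) *
        ∏ s : Fin l, (S1 (2 ^ (s : ℕ)) r (n + 1) (n + 1 - (f s.castSucc : ℕ)) : ℤ)) =
      (S2 1 r (n + k) n : ℤ) := by
  rw [show (S2 1 r (n + k) n : ℤ) = coeff k (f2 1 r n) from (coeff_f2 1 r n k).symm,
    ← Phi_prod l r n hr hn, PowerSeries.coeff_prod]
  refine Finset.sum_bij_ne_zero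
    (fun f _ _ => Finsupp.equivFunOnFinite.symm (fun s => 2 ^ (s : ℕ) * (f s : ℕ))) ?_ ?_ ?_ ?_
  · intro f hf _
    rw [Finset.mem_finsuppAntidiag]
    refine ⟨?_, Finset.subset_univ _⟩
    simp only [Finset.mem_filter, Finset.mem_univ, true_and] at hf
    simpa only [Finsupp.coe_equivFunOnFinite_symm] using hf
  · intro f₁ h₁ h₁' f₂ h₂ h₂' heq
    funext s
    have h := DFunLike.congr_fun heq s
    simp only [Finsupp.coe_equivFunOnFinite_symm] at h
    have h2 : (f₁ s : ℕ) = (f₂ s : ℕ) :=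
      Nat.eq_of_mul_eq_mul_left (by positivity) h
    exact Fin.ext h2
  · intro d hd hne
    rw [Finset.mem_finsuppAntidiag] at hd
    obtain ⟨hsum, -⟩ := hd
    have hdvd : ∀ s : Fin (l + 1), 2 ^ (s : ℕ) ∣ d s := by
      intro s
      by_contra h
      exact hne (Finset.prod_eq_zero (Finset.mem_univ s) (Phi_coeff_ne l r n s (d s) h))
    have hle : ∀ s : Fin (l + 1), d s / 2 ^ (s : ℕ) < k + 1 := by
      intro s
      have h1 : d s ≤ k := by
        have h0 := Finset.single_le_sum (f := fun s : Fin (l + 1) => d s)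
          (fun i _ => Nat.zero_le _) (Finset.mem_univ s)
        rw [← hsum]
        exact h0
      have h2 := Nat.div_le_self (d s) (2 ^ (s : ℕ))
      omega
    have hmul : ∀ s : Fin (l + 1), 2 ^ (s : ℕ) * (d s / 2 ^ (s : ℕ)) = d s :=
      fun s => Nat.mul_div_cancel' (hdvd s)
    refine ⟨fun s => ⟨d s / 2 ^ (s : ℕ), hle s⟩, ?_, ?_, ?_⟩
    · simp only [Finset.mem_filter, Finset.mem_univ, true_and]
      calc ∑ s : Fin (l + 1), 2 ^ (s : ℕ) * (d s / 2 ^ (s : ℕ))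
          = ∑ s : Fin (l + 1), d s := Finset.sum_congr rfl fun s _ => hmul s
        _ = k := hsum
    · rw [← term_eq l r n k (fun s => (⟨d s / 2 ^ (s : ℕ), hle s⟩ : Fin (k + 1)))]
      have : (∏ s : Fin (l + 1),
          coeff (2 ^ (s : ℕ) * ((fun s => (⟨d s / 2 ^ (s : ℕ), hle s⟩ : Fin (k + 1))) s : ℕ))
            (Phi l r n s)) = ∏ s : Fin (l + 1), coeff (d s) (Phi l r n s) := by
        refine Finset.prod_congr rfl fun s _ => ?_
        rw [show (((fun s => (⟨d s / 2 ^ (s : ℕ), hle s⟩ : Fin (k + 1))) s : Fin (k + 1)) : ℕ)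
          = d s / 2 ^ (s : ℕ) from rfl, hmul s]
      rw [this]
      exact hne
    · ext s
      simp only [Finsupp.coe_equivFunOnFinite_symm]
      exact hmul s
  · intro f h₁ h₂
    rw [← term_eq l r n k f]
    refine Finset.prod_congr rfl fun s _ => ?_
    congr 1

end Stmt13

theorem stmt13 (l r n k : ℕ) (hr : 1 ≤ r) (hn : r ≤ n) (hl : 1 ≤ l) :
    ∑ f ∈ Finset.univ.filter
        (fun f : Fin (l + 1) → Fin (k + 1) => ∑ s : Fin (l + 1), 2 ^ (s : ℕ) * (f s : ℕ) = k),
      S2 (2 ^ l) r (n + (f (Fin.last l) : ℕ)) n *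
        ∏ s : Fin l, S1 (2 ^ (s : ℕ)) r (n + 1) (n + 1 - (f s.castSucc : ℕ)) =
      S2 1 r (n + k) n := by
  have h := Stmt13.finalZ l r n k hr hn
  exact_mod_cast (by push_cast; exact h :
    ((∑ f ∈ Finset.univ.filter
        (fun f : Fin (l + 1) → Fin (k + 1) => ∑ s : Fin (l + 1), 2 ^ (s : ℕ) * (f s : ℕ) = k),
      S2 (2 ^ l) r (n + (f (Fin.last l) : ℕ)) n *
        ∏ s : Fin l, S1 (2 ^ (s : ℕ)) r (n + 1) (n + 1 - (f s.castSucc : ℕ)) : ℕ) : ℤ) =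
      ((S2 1 r (n + k) n : ℕ) : ℤ))
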